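/- Let −1 < p ≤ 0. For all real x, 𝓘_{p+1}(x)/𝓘_p(x) + (p+2)·𝓘_p(x)/(1 + (p+1)·𝓘_p(x)) ≥ 2. -/

import Mathlib

open Real Finset

noncomputable def besselJn (p x : ℝ) : ℝ :=
  ∑' n : ℕ, (-(1:ℝ)/4)^n * x^(2*n) / ((Real.Gamma (p+n+1) / Real.Gamma (p+1)) * n.factorial)

noncomputable def besselIn (p x : ℝ) : ℝ :=
  ∑' n : ℕ, ((1:ℝ)/4)^n * x^(2*n) / ((Real.Gamma (p+n+1) / Real.Gamma (p+1)) * n.factorial)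

noncomputable def besselJ (p x : ℝ) : ℝ :=
  ∑' n : ℕ, (-1:ℝ)^n * (x/2)^(p+2*n) / (n.factorial * Real.Gamma (p+n+1))

/-! Auxiliary development for the Huygens-type inequality. -/

noncomputable def Pk (q : ℝ) (n : ℕ) : ℝ := Real.Gamma (q + n + 1) / Real.Gamma (q + 1)

lemma Pk_zero (q : ℝ) (hq : -1 < q) : Pk q 0 = 1 := by
  simp only [Pk, Nat.cast_zero, add_zero]
  rw [div_self (ne_of_gt (Real.Gamma_pos_of_pos (by linarith)))]

lemma Pk_pos (q : ℝ) (hq : -1 < q) (n : ℕ) : 0 < Pk q n := by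
  have hn : (0:ℝ) ≤ n := Nat.cast_nonneg n
  apply div_pos <;> apply Real.Gamma_pos_of_pos <;> linarith

lemma Pk_succ (q : ℝ) (hq : -1 < q) (n : ℕ) : Pk q (n+1) = Pk q n * (q + n + 1) := by
  have hn : (0:ℝ) ≤ n := Nat.cast_nonneg n
  unfold Pk
  rw [show q + ((n:ℕ)+1:ℕ) + 1 = (q + n + 1) + 1 by push_cast; ring,
    Real.Gamma_add_one (by linarith)]
  ring

lemma Pk_shift (q : ℝ) (hq : -1 < q) (n : ℕ) :
    Pk (q+1) n = Pk q n * (q + n + 1) / (q + 1) := by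
  have hn : (0:ℝ) ≤ n := Nat.cast_nonneg n
  have h1 : Real.Gamma (q+1) ≠ 0 := ne_of_gt (Real.Gamma_pos_of_pos (by linarith))
  have e1 : Real.Gamma (q+1+1) = (q+1) * Real.Gamma (q+1) := Real.Gamma_add_one (by linarith)
  have e2 : Real.Gamma (q+1+n+1) = (q+n+1) * Real.Gamma (q+n+1) := by
    rw [show q+1+(n:ℝ)+1 = (q+n+1)+1 by ring, Real.Gamma_add_one (by linarith)]
  unfold Pk
  rw [e2, e1]
  field_simp

lemma Pk_superadd (q : ℝ) (hq : -1 < q) (k m : ℕ) : Pk q k * Pk q m ≤ Pk q (k + m) := by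
  induction m with
  | zero => simp [Pk_zero q hq]
  | succ m ih =>
    have hk : (0:ℝ) ≤ k := Nat.cast_nonneg k
    have hm : (0:ℝ) ≤ m := Nat.cast_nonneg m
    rw [Pk_succ q hq m, show k + (m+1) = (k+m)+1 by ring, Pk_succ q hq (k+m), ← mul_assoc]
    have h1 : (0:ℝ) < q + m + 1 := by linarith
    have h2 : q + m + 1 ≤ q + ((k+m:ℕ):ℝ) + 1 := by push_cast; linarith
    calc Pk q k * Pk q m * (q + m + 1) ≤ Pk q (k+m) * (q + m + 1) :=
          mul_le_mul_of_nonneg_right ih h1.le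
      _ ≤ Pk q (k+m) * (q + ((k+m:ℕ):ℝ) + 1) :=
          mul_le_mul_of_nonneg_left h2 (Pk_pos q hq _).le

noncomputable def bb (q t : ℝ) (n : ℕ) : ℝ := t^n / (Pk q n * n.factorial)

lemma bb_zero (q t : ℝ) (hq : -1 < q) : bb q t 0 = 1 := by
  simp [bb, Pk_zero q hq]

lemma bb_nonneg (q : ℝ) (hq : -1 < q) (t : ℝ) (ht : 0 ≤ t) (n : ℕ) : 0 ≤ bb q t n := by
  have := Pk_pos q hq n
  have : (0:ℝ) < n.factorial := by exact_mod_cast n.factorial_pos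
  unfold bb
  positivity

lemma bb_summable (q : ℝ) (hq : -1 < q) (t : ℝ) (ht : 0 ≤ t) : Summable (bb q t) := by
  obtain ⟨N, hN⟩ := exists_nat_gt (2*t)
  apply summable_of_ratio_norm_eventually_le (r := 1/2) (by norm_num)
  filter_upwards [Filter.eventually_ge_atTop N] with n hn
  have hn' : (0:ℝ) ≤ n := Nat.cast_nonneg n
  have hPk := Pk_pos q hq n
  have hfac : (0:ℝ) < n.factorial := by exact_mod_cast n.factorial_pos
  have hNn : (2*t : ℝ) < n := lt_of_lt_of_le hN (by exact_mod_cast hn)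
  have hd : (0:ℝ) < (q + n + 1) * (n+1) := by nlinarith
  have he : bb q t (n+1) = bb q t n * (t / ((q + n + 1) * (n+1))) := by
    unfold bb
    rw [Pk_succ q hq n, Nat.factorial_succ, pow_succ, div_mul_div_comm]
    congr 1
    push_cast
    ring
  rw [Real.norm_eq_abs, Real.norm_eq_abs, abs_of_nonneg (bb_nonneg q hq t ht _),
    abs_of_nonneg (bb_nonneg q hq t ht _), he, mul_comm (1/2 : ℝ)]
  apply mul_le_mul_of_nonneg_left _ (bb_nonneg q hq t ht n)
  rw [div_le_div_iff₀ hd (by norm_num)]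
  nlinarith

lemma bb_summable_norm (q : ℝ) (hq : -1 < q) (t : ℝ) (ht : 0 ≤ t) :
    Summable (fun n => ‖bb q t n‖) :=
  (summable_congr (fun n => by
    rw [Real.norm_eq_abs, abs_of_nonneg (bb_nonneg q hq t ht n)])).mpr (bb_summable q hq t ht)

lemma bb_one_le_tsum (q : ℝ) (hq : -1 < q) (t : ℝ) (ht : 0 ≤ t) :
    1 ≤ ∑' n : ℕ, bb q t n := by
  calc (1:ℝ) = bb q t 0 := (bb_zero q t hq).symm
    _ ≤ _ := Summable.le_tsum (bb_summable q hq t ht) 0 (fun j _ => bb_nonneg q hq t ht j)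

lemma besselIn_eq (q : ℝ) (x : ℝ) :
    besselIn q x = ∑' n : ℕ, bb q (x^2/4) n := by
  unfold besselIn
  apply tsum_congr; intro n
  rw [bb, Pk]
  congr 1
  rw [pow_mul, div_pow]
  rw [← div_pow, ← mul_pow, one_div_mul_eq_div]

lemma aa_eq (p t : ℝ) (hp : -1 < p) (n : ℕ) :
    bb (p+1) t n = (p+1)/(p+n+1) * bb p t n := by
  have hn : (0:ℝ) ≤ n := Nat.cast_nonneg n
  have h1 : (0:ℝ) < p + n + 1 := by linarith
  have h2 : (0:ℝ) < p + 1 := by linarith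
  have h3 := Pk_pos p hp n
  have h4 : (0:ℝ) < n.factorial := by exact_mod_cast n.factorial_pos
  rw [bb, bb, Pk_shift p hp n]
  field_simp

lemma bb_superadd (p t : ℝ) (hp : -1 < p) (ht : 0 ≤ t) (k m : ℕ) :
    bb p t (k+m) ≤ bb p t k * bb p t m := by
  have hfk : (0:ℝ) < k.factorial := by exact_mod_cast k.factorial_pos
  have hfm : (0:ℝ) < m.factorial := by exact_mod_cast m.factorial_pos
  have hPk := Pk_pos p hp k
  have hPm := Pk_pos p hp m
  have hfac : (k.factorial * m.factorial : ℝ) ≤ (k+m).factorial := by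
    exact_mod_cast Nat.le_of_dvd (k+m).factorial_pos
      (Nat.factorial_mul_factorial_dvd_factorial_add k m)
  have hP := Pk_superadd p hp k m
  rw [bb, bb, bb, div_mul_div_comm, ← pow_add]
  apply div_le_div_of_nonneg_left (by positivity) (by positivity)
  calc Pk p k * ↑k.factorial * (Pk p m * ↑m.factorial)
      = (Pk p k * Pk p m) * (↑k.factorial * ↑m.factorial) := by ring
    _ ≤ Pk p (k+m) * ↑(k+m).factorial :=
        mul_le_mul hP hfac (by positivity) (Pk_pos p hp _).le

lemma coeff_ineq (p t : ℝ) (hp1 : -1 < p) (hp2 : p ≤ 0) (ht : 0 ≤ t) (n : ℕ) :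
    0 ≤ bb (p+1) t n + (p+1) * (∑ k ∈ range (n+1), bb (p+1) t k * bb p t (n-k))
        - (2 * bb p t n + p * ∑ k ∈ range (n+1), bb p t k * bb p t (n-k)) := by
  have hp1' : -1 < p + 1 := by linarith
  set a : ℕ → ℝ := bb (p+1) t with ha
  set b : ℕ → ℝ := bb p t with hb
  have hbnn : ∀ m, 0 ≤ b m := fun m => bb_nonneg p hp1 t ht m
  have key : 2 * b n - a n ≤ ∑ k ∈ range (n+1), ((p+1) * a k - p * b k) * b (n-k) := by
    rcases n with _ | m
    · rw [Finset.sum_range_one]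
      simp only [Nat.sub_self, ha, hb, bb_zero p t hp1, bb_zero (p+1) t hp1']
      norm_num
    · have hn1 : (0:ℝ) ≤ m := Nat.cast_nonneg m
      have hD : (0:ℝ) < p + ((m+1:ℕ):ℝ) + 1 := by push_cast; linarith
      rw [Finset.sum_range_succ, Finset.sum_range_succ']
      have hg0 : ((p+1) * a 0 - p * b 0) * b (m + 1 - 0) = b (m+1) := by
        rw [ha, hb, bb_zero p t hp1, bb_zero (p+1) t hp1']
        simp
      have han : a (m+1) = (p+1)/(p+((m+1:ℕ):ℝ)+1) * b (m+1) := aa_eq p t hp1 (m+1)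
      have hgn : ((p+1) * a (m+1) - p * b (m+1)) * b (m + 1 - (m+1))
          = (p+1)*((p+1)/(p+((m+1:ℕ):ℝ)+1) * b (m+1)) - p * b (m+1) := by
        rw [Nat.sub_self, hb, bb_zero p t hp1, han]
        ring
      have hmid : ∀ k ∈ range m,
          (p+1)/(p+((m+1:ℕ):ℝ)+1) * b (m+1) ≤ ((p+1) * a (k+1) - p * b (k+1)) * b (m + 1 - (k+1)) := by
        intro k hk
        have hkm : k + 1 ≤ m := Finset.mem_range.mp hk
        have hkc : (0:ℝ) ≤ k := Nat.cast_nonneg k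
        have hu : (0:ℝ) < p + ((k+1:ℕ):ℝ) + 1 := by push_cast; linarith
        have huD : (p + ((k+1:ℕ):ℝ) + 1) ≤ p + ((m+1:ℕ):ℝ) + 1 := by
          push_cast
          have : (k:ℝ) + 1 ≤ m := by exact_mod_cast hkm
          linarith
        set u : ℝ := p + ((k+1:ℕ):ℝ) + 1 with hudef
        set D : ℝ := p + ((m+1:ℕ):ℝ) + 1 with hDdef
        have hc : (p+1)/D ≤ (p+1) * ((p+1)/u) - p := by
          have h1 : (p+1) * ((p+1)/u) - p = ((p+1)*(p+1) - p*u)/u := by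
            field_simp
          rw [h1, div_le_div_iff₀ hD hu]
          have hDm : D = p + ((m:ℝ)+1) + 1 := by rw [hDdef]; push_cast; ring
          nlinarith [mul_nonneg (mul_nonneg (by linarith : (0:ℝ) ≤ p+1) (by linarith : (0:ℝ) ≤ p+1))
              (sub_nonneg.mpr huD),
            mul_nonneg hu.le (mul_nonneg (neg_nonneg.mpr hp2) (by push_cast; linarith : (0:ℝ) ≤ ((m+1:ℕ):ℝ)))]
        have hcnn : 0 ≤ (p+1) * ((p+1)/u) - p :=
          le_trans (div_nonneg (by linarith) hD.le) hc
        have hbb : b (m+1) ≤ b (k+1) * b (m + 1 - (k+1)) := by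
          have h := bb_superadd p t hp1 ht (k+1) (m - k)
          have e1 : (k+1) + (m-k) = m+1 := by omega
          have e2 : m + 1 - (k+1) = m - k := by omega
          rw [e1] at h
          rw [e2]
          exact h
        have hak : a (k+1) = (p+1)/u * b (k+1) := by
          rw [ha, aa_eq p t hp1 (k+1), hudef]
        calc (p+1)/D * b (m+1) ≤ ((p+1) * ((p+1)/u) - p) * b (m+1) :=
              mul_le_mul_of_nonneg_right hc (hbnn _)
          _ ≤ ((p+1) * ((p+1)/u) - p) * (b (k+1) * b (m + 1 - (k+1))) :=
              mul_le_mul_of_nonneg_left hbb hcnn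
          _ = ((p+1) * a (k+1) - p * b (k+1)) * b (m + 1 - (k+1)) := by
              rw [hak]; ring
      have hsum : (m : ℝ) * ((p+1)/(p+((m+1:ℕ):ℝ)+1) * b (m+1))
          ≤ ∑ k ∈ range m, ((p+1) * a (k+1) - p * b (k+1)) * b (m + 1 - (k+1)) := by
        have := Finset.card_nsmul_le_sum (range m)
          (fun k => ((p+1) * a (k+1) - p * b (k+1)) * b (m + 1 - (k+1)))
          ((p+1)/(p+((m+1:ℕ):ℝ)+1) * b (m+1)) hmid
        simpa [nsmul_eq_mul] using this
      have hXD : (p+1)/(p+((m+1:ℕ):ℝ)+1) * (p+((m+1:ℕ):ℝ)+1) = p+1 :=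
        div_mul_cancel₀ _ hD.ne'
      have e : (p+1)/(p+((m+1:ℕ):ℝ)+1) * (p+((m+1:ℕ):ℝ)+1) * b (m+1) = (p+1) * b (m+1) := by
        rw [hXD]
      have hm1 : ((m+1:ℕ):ℝ) = (m:ℝ) + 1 := by push_cast; ring
      rw [hg0, hgn]
      rw [han]
      rw [hm1] at e hsum ⊢
      nlinarith [hsum, hbnn (m+1), e]
  have hsum2 : ∑ k ∈ range (n+1), ((p+1) * a k - p * b k) * b (n-k)
      = (p+1) * (∑ k ∈ range (n+1), a k * b (n-k)) - p * ∑ k ∈ range (n+1), b k * b (n-k) := by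
    rw [Finset.mul_sum, Finset.mul_sum, ← Finset.sum_sub_distrib]
    apply Finset.sum_congr rfl
    intro k _
    ring
  rw [hsum2] at key
  linarith

theorem huygens_type_modified (p : ℝ) (hp1 : -1 < p) (hp2 : p ≤ 0) (x : ℝ) :
    besselIn (p+1) x / besselIn p x + (p+2) * besselIn p x / (1 + (p+1) * besselIn p x) ≥ 2 := by
  have hp1' : -1 < p + 1 := by linarith
  set t := x^2/4 with htdef
  have ht : 0 ≤ t := by positivity
  have hAe : besselIn (p+1) x = ∑' n, bb (p+1) t n := besselIn_eq (p+1) x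
  have hBe : besselIn p x = ∑' n, bb p t n := besselIn_eq p x
  have hSb := bb_summable p hp1 t ht
  have hSa := bb_summable (p+1) hp1' t ht
  have hSbn := bb_summable_norm p hp1 t ht
  have hSan := bb_summable_norm (p+1) hp1' t ht
  set A := ∑' n, bb (p+1) t n with hA
  set B := ∑' n, bb p t n with hB
  have hB1 : 1 ≤ B := bb_one_le_tsum p hp1 t ht
  have hB0 : 0 < B := by linarith
  have hden : 0 < 1 + (p+1) * B := by nlinarith
  -- Cauchy products
  have eAB : A * B = ∑' n, ∑ k ∈ range (n+1), bb (p+1) t k * bb p t (n-k) :=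
    tsum_mul_tsum_eq_tsum_sum_range_of_summable_norm hSan hSbn
  have eBB : B * B = ∑' n, ∑ k ∈ range (n+1), bb p t k * bb p t (n-k) :=
    tsum_mul_tsum_eq_tsum_sum_range_of_summable_norm hSbn hSbn
  have hSAB : Summable (fun n => ∑ k ∈ range (n+1), bb (p+1) t k * bb p t (n-k)) :=
    (summable_norm_sum_mul_range_of_summable_norm hSan hSbn).of_norm
  have hSBB : Summable (fun n => ∑ k ∈ range (n+1), bb p t k * bb p t (n-k)) :=
    (summable_norm_sum_mul_range_of_summable_norm hSbn hSbn).of_norm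
  have comb : ∑' n, (bb (p+1) t n + (p+1) * (∑ k ∈ range (n+1), bb (p+1) t k * bb p t (n-k))
        - (2 * bb p t n + p * ∑ k ∈ range (n+1), bb p t k * bb p t (n-k)))
      = A + (p+1) * (A*B) - (2*B + p*(B*B)) := by
    rw [eAB, eBB]
    rw [Summable.tsum_sub (hSa.add (hSAB.mul_left _)) ((hSb.mul_left 2).add (hSBB.mul_left p)),
      Summable.tsum_add hSa (hSAB.mul_left _), Summable.tsum_add (hSb.mul_left 2) (hSBB.mul_left p),
      tsum_mul_left, tsum_mul_left, tsum_mul_left]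
  have hnn : 0 ≤ A + (p+1) * (A*B) - (2*B + p*(B*B)) := by
    rw [← comb]
    exact tsum_nonneg (fun n => coeff_ineq p t hp1 hp2 ht n)
  rw [hAe, hBe, ge_iff_le, div_add_div _ _ hB0.ne' hden.ne',
    le_div_iff₀ (by positivity)]
  nlinarith [hnn]
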